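/- Let Γ¹, Γ² be finite nonempty sets and let u, w : Γ¹ × Γ² → ℝ. Suppose that for every (i,j) in the argmax set Γ̃ = argmax (u − w), at least one of the following holds: (a) there exists k ∈ Γ¹, k ≠ i, with u(i,j) − u(k,j) = c₁(i,k) = w(i,j) − w(k,j) for some function c₁, and then (k,j) ∈ Γ̃; or (b) there exists l ∈ Γ², l ≠ j, with u(i,j) − u(i,l) = c₂(j,l) = w(i,j) − w(i,l) and then (i,l) ∈ Γ̃. Then there exists a finite sequence of pairs (i₁,j₁), …, (i_N,j_N) in Γ̃ with (i_N,j_N) = (i₁,j₁), N ≥ 2, such that consecutive pairs differ in exactly one coordinate. -/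
import Mathlib


theorem stmt_12 {Γ₁ Γ₂ : Type*} [Fintype Γ₁] [Nonempty Γ₁] [Fintype Γ₂] [Nonempty Γ₂]
    (u w : Γ₁ × Γ₂ → ℝ) (c₁ : Γ₁ → Γ₁ → ℝ) (c₂ : Γ₂ → Γ₂ → ℝ)
    (Γt : Set (Γ₁ × Γ₂))
    (hΓt : Γt = {p | u p - w p = ⨆ q : Γ₁ × Γ₂, (u q - w q)})
    (hstep : ∀ p ∈ Γt,
      (∃ k : Γ₁, k ≠ p.1 ∧ u p - u (k, p.2) = c₁ p.1 k ∧
        w p - w (k, p.2) = c₁ p.1 k ∧ (k, p.2) ∈ Γt) ∨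
      (∃ l : Γ₂, l ≠ p.2 ∧ u p - u (p.1, l) = c₂ p.2 l ∧
        w p - w (p.1, l) = c₂ p.2 l ∧ (p.1, l) ∈ Γt)) :
    ∃ (N : ℕ) (s : ℕ → Γ₁ × Γ₂), 1 ≤ N ∧ s N = s 0 ∧
      (∀ q ≤ N, s q ∈ Γt) ∧
      (∀ q < N,
        ((s q).1 = (s (q + 1)).1 ∧ (s q).2 ≠ (s (q + 1)).2) ∨
        ((s q).1 ≠ (s (q + 1)).1 ∧ (s q).2 = (s (q + 1)).2)) := by
  classical
  -- The argmax set is nonempty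
  obtain ⟨p0, hp0⟩ := Finite.exists_max (fun q : Γ₁ × Γ₂ => u q - w q)
  have hp0m : p0 ∈ Γt := by
    rw [hΓt]
    exact le_antisymm (le_ciSup (Finite.bddAbove_range fun q => u q - w q) p0)
      (ciSup_le hp0)
  -- one-step move
  have hnext : ∀ p : Γ₁ × Γ₂, p ∈ Γt → ∃ q : Γ₁ × Γ₂, q ∈ Γt ∧
      ((p.1 = q.1 ∧ p.2 ≠ q.2) ∨ (p.1 ≠ q.1 ∧ p.2 = q.2)) := by
    intro p hp
    rcases hstep p hp with ⟨k, hk, _, _, hkm⟩ | ⟨l, hl, _, _, hlm⟩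
    · exact ⟨(k, p.2), hkm, Or.inr ⟨Ne.symm hk, rfl⟩⟩
    · exact ⟨(p.1, l), hlm, Or.inl ⟨rfl, Ne.symm hl⟩⟩
  choose F hF1 hF2 using hnext
  -- infinite walk inside Γt
  let t : ℕ → {p : Γ₁ × Γ₂ // p ∈ Γt} := fun n =>
    Nat.rec ⟨p0, hp0m⟩ (fun _ q => ⟨F q.1 q.2, hF1 q.1 q.2⟩) n
  have hmem : ∀ n, (t n).1 ∈ Γt := fun n => (t n).2
  have hstep' : ∀ n,
      ((t n).1.1 = (t (n + 1)).1.1 ∧ (t n).1.2 ≠ (t (n + 1)).1.2) ∨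
      ((t n).1.1 ≠ (t (n + 1)).1.1 ∧ (t n).1.2 = (t (n + 1)).1.2) :=
    fun n => hF2 (t n).1 (t n).2
  -- pigeonhole: the walk revisits a point
  have : Finite {p : Γ₁ × Γ₂ // p ∈ Γt} := Subtype.finite
  obtain ⟨a, b, hab, heq⟩ := Finite.exists_ne_map_eq_of_infinite t
  wlog hlt : a < b generalizing a b
  · exact this b a hab.symm heq.symm ((hab.lt_or_gt).resolve_left hlt)
  refine ⟨b - a, fun q => (t (a + q)).1, ?_, ?_, ?_, ?_⟩
  · omega
  · show (t (a + (b - a))).1 = (t (a + 0)).1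
    rw [show a + (b - a) = b from by omega, ← heq, Nat.add_zero]
  · intro q _; exact hmem _
  · intro q _
    show ((t (a + q)).1.1 = (t (a + (q + 1))).1.1 ∧ _) ∨ (_ ∧ (t (a + q)).1.2 = (t (a + (q + 1))).1.2)
    rw [show a + (q + 1) = a + q + 1 from by omega]
    exact hstep' (a + q)
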